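/- In the three-machine schedule produced by the RS aggregation algorithm, if the critical jobs satisfy u < v, then C_max ≤ sum_{j∈J} p_{1j} + sum_{j∈J} p_{2j}. -/
import Mathlib


open Finset

/-- In the three-machine RS schedule (jobs indexed in schedule
order), if the critical jobs satisfy `u < v` (and, as in the corresponding case
of the analysis, `p₁ u ≥ p₃ u`), then `Cmax ≤ ∑ j, p₁ j + ∑ j, p₂ j`. -/
theorem rs_two_critical_jobs_bound
    (n : ℕ) (p1 p2 p3 : Fin n → ℝ)
    (hp1 : ∀ j, 0 ≤ p1 j) (hp2 : ∀ j, 0 ≤ p2 j) (hp3 : ∀ j, 0 ≤ p3 j)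
    -- Johnson order of the artificial two-machine problem
    -- (`a_j = p₁ j + p₂ j`, `b_j = p₂ j + p₃ j`): every job scheduled after a
    -- job with `a ≥ b` (i.e. `p₁ ≥ p₃`) also satisfies `p₁ ≥ p₃`
    (hJ : ∀ k l : Fin n, k < l → p3 k ≤ p1 k → p3 l ≤ p1 l)
    (u v : Fin n) (huv : u < v) (hu : p3 u ≤ p1 u) (Cmax : ℝ)
    -- `u` and `v` are the critical jobs of the RS schedule
    (hC : Cmax = (∑ j ∈ Finset.univ.filter (fun j => j ≤ u), p1 j) +
                 (∑ j ∈ Finset.univ.filter (fun j => u ≤ j ∧ j ≤ v), p2 j) +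
                 (∑ j ∈ Finset.univ.filter (fun j => v ≤ j), p3 j)) :
    Cmax ≤ (∑ j, p1 j) + (∑ j, p2 j) := by
  have h3 : (∑ j ∈ Finset.univ.filter (fun j => v ≤ j), p3 j) ≤
      (∑ j ∈ Finset.univ.filter (fun j => v ≤ j), p1 j) := by
    apply Finset.sum_le_sum
    intro j hj
    simp only [Finset.mem_filter] at hj
    exact hJ u j (lt_of_lt_of_le huv hj.2) hu
  have hdisj : Disjoint (Finset.univ.filter (fun j : Fin n => j ≤ u))
      (Finset.univ.filter (fun j : Fin n => v ≤ j)) := by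
    rw [Finset.disjoint_filter]
    intro j _ hju hvj
    exact absurd (lt_of_lt_of_le huv hvj) (not_lt.mpr hju)
  have h1 : (∑ j ∈ Finset.univ.filter (fun j => j ≤ u), p1 j) +
      (∑ j ∈ Finset.univ.filter (fun j => v ≤ j), p1 j) ≤ ∑ j, p1 j := by
    rw [← Finset.sum_union hdisj]
    exact Finset.sum_le_sum_of_subset_of_nonneg (Finset.subset_univ _)
      (fun i _ _ => hp1 i)
  have h2 : (∑ j ∈ Finset.univ.filter (fun j => u ≤ j ∧ j ≤ v), p2 j) ≤ ∑ j, p2 j :=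
    Finset.sum_le_sum_of_subset_of_nonneg (Finset.subset_univ _) (fun i _ _ => hp2 i)
  rw [hC]
  linarith
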